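/- Conditioning-set augmentation step of the thorough querying lemma: in the setting below, suppose the query sampling is thorough and sequence-optimality holds for all times t ≤ n (i.e., for all t ≤ n, all q with S_{q,t} > 0, and all positive-probability histories j_{1..t}, μ(A_{q,t} | w_t = ŵ_t(j_{1..t})) = μ(A_{q,t} | I_{1..t} = j_{1..t})). Then for every instruction history i_{1..n+1} with μ(I_{1..n+1} = i_{1..n+1}) > 0 and every query q with S_{q,n+1} > 0, μ(A_{q,n+1} | {w_n = ŵ_n(i_{1..n})} ∩ {I_{n+1} = i_{n+1}}) = μ(A_{q,n+1} | I_{1..n+1} = i_{1..n+1}), where ŵ_t(i_{1..t}) denotes the deterministic value of w_t along the history i_{1..t}. -/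
import Mathlib


open MeasureTheory ProbabilityTheory

variable {Ω 𝓘 𝓠 𝓦 : Type*}

/-- The event that the instruction history up to time `n` equals `i₁, …, iₙ`
(only the times `1 ≤ t ≤ n` matter). -/
def histEvent (I : ℕ → Ω → Finset 𝓘) (i : ℕ → Finset 𝓘) (n : ℕ) : Set Ω :=
  {ω | ∀ t, 1 ≤ t → t ≤ n → I t ω = i t}

/-- The random world states `w_t`, defined recursively from the fixed initial state `w0`
and the deterministic updater `fδ` by `w_t = fδ (w_{t-1}, I_t)`. -/
def wseq (w0 : 𝓦) (fδ : 𝓦 → Finset 𝓘 → 𝓦) (I : ℕ → Ω → Finset 𝓘) : ℕ → Ω → 𝓦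
  | 0 => fun _ => w0
  | t + 1 => fun ω => fδ (wseq w0 fδ I t ω) (I (t + 1) ω)

/-- The deterministic value `ŵ_t(i_{1..t})` of the world state along the fixed history `i`. -/
def detW (w0 : 𝓦) (fδ : 𝓦 → Finset 𝓘 → 𝓦) (i : ℕ → Finset 𝓘) : ℕ → 𝓦
  | 0 => w0
  | t + 1 => fδ (detW w0 fδ i t) (i (t + 1))

/-- `q` is a recall query, at query time `t'`, for the instruction `v` received at time
`t ≤ t'`: for every positive-probability instruction history `i_{1..t'}` with `v ∈ i_t`,
the answer to `q` at time `t'` is almost surely `True` given the history, and almost surely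
`False` given the history with `v` removed from `i_t` (whenever the latter conditioning
event has positive probability). -/
def IsRecallQuery [MeasurableSpace Ω] [DecidableEq 𝓘] (μ : Measure Ω)
    (I : ℕ → Ω → Finset 𝓘) (A : 𝓠 → ℕ → Set Ω) (q : 𝓠) (v : 𝓘) (t t' : ℕ) : Prop :=
  t ≤ t' ∧
  (∀ i : ℕ → Finset 𝓘, v ∈ i t → 0 < μ (histEvent I i t') →
      μ[A q t' | histEvent I i t'] = 1) ∧
  (∀ i : ℕ → Finset 𝓘, v ∈ i t →
      0 < μ (histEvent I (Function.update i t (i t \ {v})) t') →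
      μ[A q t' | histEvent I (Function.update i t (i t \ {v})) t'] = 0)

/-- The query sampling is thorough: for every positive-probability instruction history
`i_{1..n}`, every time `1 ≤ t ≤ n`, every instruction `v ∈ i_t`, and every `t' ≥ t`,
there is a recall query for `v` at times `(t, t')` with positive sampling probability. -/
def Thorough [MeasurableSpace Ω] [DecidableEq 𝓘] (μ : Measure Ω)
    (I : ℕ → Ω → Finset 𝓘) (A : 𝓠 → ℕ → Set Ω) (S : 𝓠 → ℕ → ℝ) : Prop :=
  ∀ (n : ℕ) (i : ℕ → Finset 𝓘), 0 < μ (histEvent I i n) →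
    ∀ t, 1 ≤ t → t ≤ n → ∀ v ∈ i t, ∀ t', t ≤ t' →
      ∃ q : 𝓠, IsRecallQuery μ I A q v t t' ∧ 0 < S q t'

/-- The model `(w0, fδ)` is stepwise-optimal: at every time `t + 1`, for every query with
positive sampling probability and every positive-probability pair (previous world state,
incoming instruction set), conditioning on the updated world state gives the same
probability as conditioning on the previous world state and the incoming instructions. -/
def StepwiseOptimal [MeasurableSpace Ω] (μ : Measure Ω)
    (I : ℕ → Ω → Finset 𝓘) (A : 𝓠 → ℕ → Set Ω) (S : 𝓠 → ℕ → ℝ)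
    (w0 : 𝓦) (fδ : 𝓦 → Finset 𝓘 → 𝓦) : Prop :=
  ∀ (t : ℕ) (q : 𝓠), 0 < S q (t + 1) →
    ∀ (w : 𝓦) (s : Finset 𝓘),
      0 < μ ({ω | wseq w0 fδ I t ω = w} ∩ {ω | I (t + 1) ω = s}) →
      μ[A q (t + 1) | {ω | wseq w0 fδ I (t + 1) ω = fδ w s}]
        = μ[A q (t + 1) | {ω | wseq w0 fδ I t ω = w} ∩ {ω | I (t + 1) ω = s}]

section Aux

variable {Ω 𝓘 𝓠 𝓦 : Type*}

lemma histEvent_succ_subset (I : ℕ → Ω → Finset 𝓘) (i : ℕ → Finset 𝓘) (n : ℕ) :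
    histEvent I i (n + 1) ⊆ histEvent I i n :=
  fun _ h t h1 h2 => h t h1 (h2.trans n.le_succ)

lemma wseq_eq_detW (w0 : 𝓦) (fδ : 𝓦 → Finset 𝓘 → 𝓦) (I : ℕ → Ω → Finset 𝓘)
    (i : ℕ → Finset 𝓘) : ∀ (n : ℕ), ∀ ω ∈ histEvent I i n,
    wseq w0 fδ I n ω = detW w0 fδ i n := by
  intro n
  induction n with
  | zero => intro ω _; rfl
  | succ n ih =>
    intro ω hω
    have h1 : I (n + 1) ω = i (n + 1) := hω (n + 1) (Nat.succ_le_succ n.zero_le) le_rfl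
    simp only [wseq, detW, ih ω (histEvent_succ_subset I i n hω), h1]

open MeasureTheory ProbabilityTheory in
lemma subset_of_detW_eq [MeasurableSpace Ω] [DecidableEq 𝓘]
    (μ : Measure Ω)
    (I : ℕ → Ω → Finset 𝓘) (A : 𝓠 → ℕ → Set Ω) (S : 𝓠 → ℕ → ℝ)
    (w0 : 𝓦) (fδ : 𝓦 → Finset 𝓘 → 𝓦) (n : ℕ)
    (hT : Thorough μ I A S)
    (hSeq : ∀ t, 1 ≤ t → t ≤ n → ∀ q : 𝓠, 0 < S q t → ∀ j : ℕ → Finset 𝓘,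
        0 < μ (histEvent I j t) →
        μ[A q t | {ω | wseq w0 fδ I t ω = detW w0 fδ j t}]
          = μ[A q t | histEvent I j t])
    (i j : ℕ → Finset 𝓘) (hi : 0 < μ (histEvent I i n)) (hj : 0 < μ (histEvent I j n))
    (hw : detW w0 fδ i n = detW w0 fδ j n)
    (t : ℕ) (h1 : 1 ≤ t) (h2 : t ≤ n) : i t ⊆ j t := by
  intro v hv
  by_contra hvj
  obtain ⟨q, ⟨-, hq1, hq0⟩, hSq⟩ := hT n i hi t h1 h2 v hv n h2
  have e1 : μ[A q n | histEvent I i n] = 1 := hq1 i hv hi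
  -- build the augmented history j'
  set j' : ℕ → Finset 𝓘 := Function.update j t (insert v (j t)) with hj'
  have hvt : v ∈ j' t := by simp [hj']
  have hset : j' t \ {v} = j t := by
    simp only [hj', Function.update_self]
    ext a
    simp only [Finset.mem_sdiff, Finset.mem_insert, Finset.mem_singleton]
    constructor
    · rintro ⟨h | h, hne⟩
      · exact absurd h hne
      · exact h
    · intro ha
      exact ⟨Or.inr ha, fun e => hvj (e ▸ ha)⟩
  have hupd : Function.update j' t (j' t \ {v}) = j := by
    rw [hset]
    funext s
    rcases eq_or_ne s t with h | h
    · subst h; simp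
    · simp [Function.update_of_ne h, hj']
  have e0 := hq0 j' hvt
  rw [hupd] at e0
  have e0 := e0 hj
  have h1n : 1 ≤ n := h1.trans h2
  have si := hSeq n h1n le_rfl q hSq i hi
  have sj := hSeq n h1n le_rfl q hSq j hj
  rw [e1, hw] at si
  rw [e0] at sj
  exact one_ne_zero (si.symm.trans sj)

end Aux

/-- **Conditioning-set augmentation step of the thorough querying lemma.** Suppose the
query sampling is thorough and sequence-optimality holds for all times `1 ≤ t ≤ n`. Then
for every positive-probability instruction history `i_{1..n+1}` and every query `q` with
`S_{q,n+1} > 0`, conditioning on the world state `w_n = ŵ_n(i_{1..n})` together with the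
incoming instructions `I_{n+1} = i_{n+1}` gives the same probability of `A_{q,n+1}` as
conditioning on the full history `I_{1..n+1} = i_{1..n+1}`. -/
theorem cond_worldState_instructions_eq_cond_history
    [Countable Ω] [MeasurableSpace Ω] [MeasurableSingletonClass Ω]
    [Countable 𝓘] [DecidableEq 𝓘]
    (μ : Measure Ω) [IsProbabilityMeasure μ]
    (I : ℕ → Ω → Finset 𝓘) (A : 𝓠 → ℕ → Set Ω) (S : 𝓠 → ℕ → ℝ)
    (w0 : 𝓦) (fδ : 𝓦 → Finset 𝓘 → 𝓦) (n : ℕ)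
    (hT : Thorough μ I A S)
    (hSeq : ∀ t, 1 ≤ t → t ≤ n → ∀ q : 𝓠, 0 < S q t → ∀ j : ℕ → Finset 𝓘,
        0 < μ (histEvent I j t) →
        μ[A q t | {ω | wseq w0 fδ I t ω = detW w0 fδ j t}]
          = μ[A q t | histEvent I j t]) :
    ∀ i : ℕ → Finset 𝓘, 0 < μ (histEvent I i (n + 1)) →
      ∀ q : 𝓠, 0 < S q (n + 1) →
        μ[A q (n + 1) |
            {ω | wseq w0 fδ I n ω = detW w0 fδ i n} ∩ {ω | I (n + 1) ω = i (n + 1)}]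
          = μ[A q (n + 1) | histEvent I i (n + 1)] := by
  intro i hi q hSq
  set H := histEvent I i (n + 1) with hH
  set B := {ω | wseq w0 fδ I n ω = detW w0 fδ i n} ∩ {ω | I (n + 1) ω = i (n + 1)} with hB
  have hHB : H ⊆ B := fun ω hω =>
    ⟨wseq_eq_detW w0 fδ I i n ω (histEvent_succ_subset I i n hω),
      hω (n + 1) (Nat.succ_le_succ n.zero_le) le_rfl⟩
  have hnull : μ (B \ H) = 0 := by
    rw [← Set.biUnion_of_singleton (B \ H), measure_biUnion_null_iff (Set.to_countable _)]
    intro ω hω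
    by_contra h0
    have hpos : 0 < μ {ω} := pos_iff_ne_zero.mpr h0
    set j : ℕ → Finset 𝓘 := fun t => I t ω with hjdef
    have hωj : ω ∈ histEvent I j (n + 1) := fun t _ _ => rfl
    have hjpos : 0 < μ (histEvent I j (n + 1)) :=
      hpos.trans_le (measure_mono (Set.singleton_subset_iff.mpr hωj))
    have hjn : 0 < μ (histEvent I j n) :=
      hjpos.trans_le (measure_mono (histEvent_succ_subset I j n))
    have hin : 0 < μ (histEvent I i n) :=
      hi.trans_le (measure_mono (histEvent_succ_subset I i n))
    have hw : detW w0 fδ j n = detW w0 fδ i n := by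
      rw [← wseq_eq_detW w0 fδ I j n ω (fun t _ _ => rfl)]
      exact hω.1.1
    have heq : ∀ t, 1 ≤ t → t ≤ n → j t = i t := fun t h1 h2 =>
      Finset.Subset.antisymm
        (subset_of_detW_eq μ I A S w0 fδ n hT hSeq j i hjn hin hw t h1 h2)
        (subset_of_detW_eq μ I A S w0 fδ n hT hSeq i j hin hjn hw.symm t h1 h2)
    apply hω.2
    intro t h1 h2
    rcases eq_or_lt_of_le h2 with h | h
    · rw [h]; exact hω.1.2
    · exact heq t h1 (Nat.lt_succ_iff.mp h)
  have hBm : MeasurableSet B := (Set.to_countable B).measurableSet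
  have hHm : MeasurableSet H := (Set.to_countable H).measurableSet
  have hmB : μ B = μ H :=
    (measure_eq_measure_of_null_diff hHB hnull).symm
  have hmBA : μ (B ∩ A q (n + 1)) = μ (H ∩ A q (n + 1)) := by
    refine (measure_eq_measure_of_null_diff (Set.inter_subset_inter_left _ hHB) ?_).symm
    have hsub : (B ∩ A q (n + 1)) \ (H ∩ A q (n + 1)) ⊆ B \ H :=
      fun ω hω' => ⟨hω'.1.1, fun hh => hω'.2 ⟨hh, hω'.1.2⟩⟩
    exact measure_mono_null hsub hnull
  rw [cond_apply hBm μ, cond_apply hHm μ, hmB, hmBA]
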